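/- arXiv:math/0612699 — 3 statements merged into one kernel-verified Lean document; each statement's English description precedes it below -/
import Mathlib

section
/- Let p ≥ 1 and let F : ℝ → ℝ be measurable, locally integrable, and of bounded p-variation, i.e. V_p(F) < ∞. For ε > 0 define H_ε(x) := ε⁻¹ ∫_x^{x+ε} F(y) dy. Then H_ε has bounded p-variation with V_p(H_ε) ≤ V_p(F). -/
set_option maxHeartbeats 1000000


open MeasureTheory Filter Set
open scoped ENNReal

/-- The `p`-variation of a function `F : ℝ → ℝ`: the supremum over all finite increasing
sequences `x_0 < x_1 < ⋯ < x_n` of `(∑ |F(x_{i+1}) − F(x_i)|^p)^{1/p}`, valued in `ℝ≥0∞`. -/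
noncomputable def pVar (p : ℝ) (F : ℝ → ℝ) : ℝ≥0∞ :=
  ⨆ (n : ℕ) (u : Fin (n + 1) → ℝ) (_ : StrictMono u),
    (∑ i : Fin n, ENNReal.ofReal |F (u i.succ) - F (u i.castSucc)| ^ p) ^ (1 / p)

/-- The ENNReal-valued quantity in the definition of `pVar` is `ofReal` of the
corresponding real quantity. -/
lemma pVar_term_eq_ofReal (p : ℝ) (hp : 0 ≤ p) (F : ℝ → ℝ) {n : ℕ} (u : Fin (n + 1) → ℝ) :
    (∑ i : Fin n, ENNReal.ofReal |F (u i.succ) - F (u i.castSucc)| ^ p) ^ (1 / p)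
      = ENNReal.ofReal ((∑ i : Fin n, |F (u i.succ) - F (u i.castSucc)| ^ p) ^ (1 / p)) := by
  have hsum : (∑ i : Fin n, ENNReal.ofReal |F (u i.succ) - F (u i.castSucc)| ^ p)
      = ENNReal.ofReal (∑ i : Fin n, |F (u i.succ) - F (u i.castSucc)| ^ p) := by
    rw [ENNReal.ofReal_sum_of_nonneg (fun i _ => Real.rpow_nonneg (abs_nonneg _) p)]
    exact Finset.sum_congr rfl fun i _ =>
      (ENNReal.ofReal_rpow_of_nonneg (abs_nonneg _) hp)
  rw [hsum, ENNReal.ofReal_rpow_of_nonneg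
    (Finset.sum_nonneg fun i _ => Real.rpow_nonneg (abs_nonneg _) p) (by positivity)]

lemma le_pVar (p : ℝ) (F : ℝ → ℝ) {n : ℕ} (u : Fin (n + 1) → ℝ) (hu : StrictMono u) :
    (∑ i : Fin n, ENNReal.ofReal |F (u i.succ) - F (u i.castSucc)| ^ p) ^ (1 / p)
      ≤ pVar p F := by
  refine le_trans ?_ (le_iSup _ n)
  refine le_trans ?_ (le_iSup _ u)
  exact le_iSup_of_le hu le_rfl

/-- For `p ≥ 1` and `F` measurable, locally integrable and of bounded
`p`-variation, the averaged function `H_ε(x) = ε⁻¹ ∫_x^{x+ε} F(y) dy` has bounded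
`p`-variation with `V_p(H_ε) ≤ V_p(F)`. -/
theorem pVar_averaged_le (p : ℝ) (hp : 1 ≤ p) (F : ℝ → ℝ) (hFm : Measurable F)
    (hFi : LocallyIntegrable F (volume : Measure ℝ)) (hFv : pVar p F < ⊤)
    (ε : ℝ) (hε : 0 < ε) :
    pVar p (fun x => ε⁻¹ * ∫ y in x..(x + ε), F y) ≤ pVar p F := by
  have hp0 : (0 : ℝ) < p := lt_of_lt_of_le one_pos hp
  set H : ℝ → ℝ := fun x => ε⁻¹ * ∫ y in x..(x + ε), F y with hH
  set M : ℝ := (pVar p F).toReal with hM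
  have hM0 : 0 ≤ M := ENNReal.toReal_nonneg
  -- real form of the p-variation bound for F
  have hreal : ∀ (n : ℕ) (u : Fin (n + 1) → ℝ), StrictMono u →
      (∑ i : Fin n, |F (u i.succ) - F (u i.castSucc)| ^ p) ^ (1 / p) ≤ M := by
    intro n u hu
    have h1 := le_pVar p F u hu
    rw [pVar_term_eq_ofReal p hp0.le F u] at h1
    exact (ENNReal.ofReal_le_iff_le_toReal hFv.ne).mp h1
  -- interval integrability of translated F
  have hIg : ∀ c : ℝ, IntervalIntegrable (fun t => F (c + t)) volume 0 ε := by
    intro c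
    have h0 : IntervalIntegrable F volume c (c + ε) :=
      (hFi.integrableOn_isCompact isCompact_uIcc).intervalIntegrable
    have h1 := h0.comp_add_left c
    simpa using h1
  -- pVar of H: bound each term
  rw [pVar]
  refine iSup_le fun n => iSup_le fun u => iSup_le fun hu => ?_
  rw [pVar_term_eq_ofReal p hp0.le H u]
  -- it suffices to prove the real inequality
  have hofM : ENNReal.ofReal M = pVar p F := ENNReal.ofReal_toReal hFv.ne
  rw [← hofM]
  refine ENNReal.ofReal_le_ofReal ?_
  -- set up the PiLp space
  set q : ℝ≥0∞ := ENNReal.ofReal p with hq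
  haveI : Fact (1 ≤ q) := ⟨by simpa [hq] using ENNReal.one_le_ofReal.mpr hp⟩
  have hqt : q.toReal = p := ENNReal.toReal_ofReal hp0.le
  set L := WithLp.linearEquiv q ℝ (Fin n → ℝ) with hL
  set g : Fin n → ℝ → ℝ := fun i t => F (u i.succ + t) - F (u i.castSucc + t) with hg
  have hgi : ∀ i, IntervalIntegrable (g i) volume 0 ε := fun i =>
    (hIg (u i.succ)).sub (hIg (u i.castSucc))
  set G : ℝ → PiLp q (fun _ : Fin n => ℝ) := fun t => L.symm (fun i => g i t) with hG
  have hGapp : ∀ t i, G t i = g i t := fun t i => rfl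
  -- pointwise norm bound ‖G t‖ ≤ M
  have hGnorm : ∀ t : ℝ, ‖G t‖ ≤ M := by
    intro t
    have hmono : StrictMono (fun i => u i + t) := fun a c hac => by
      simpa using add_lt_add_right (hu hac) t
    have hub := hreal n (fun i => u i + t) hmono
    rw [PiLp.norm_eq_sum (by rw [hqt]; exact hp0) (G t), hqt]
    exact hub
  -- integrability of G
  have hGm : StronglyMeasurable G := by
    have h0 : StronglyMeasurable (fun t => (fun i => g i t) : ℝ → (Fin n → ℝ)) :=
      (measurable_pi_lambda _ fun i =>
        (hFm.comp (measurable_const_add _)).sub (hFm.comp (measurable_const_add _))).stronglyMeasurable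
    exact ((PiLp.continuousLinearEquiv q ℝ
      (fun _ : Fin n => ℝ)).symm.continuous).comp_stronglyMeasurable h0
  have hGint : IntervalIntegrable G volume 0 ε := by
    rw [intervalIntegrable_iff]
    refine Integrable.mono' (g := fun _ => M) ?_ ?_ ?_
    · exact integrableOn_const (by rw [uIoc_of_le hε.le]; exact measure_Ioc_lt_top.ne)
    · exact hGm.aestronglyMeasurable
    · exact Filter.Eventually.of_forall fun t => hGnorm t
  -- components of the integral
  set I := ∫ t in (0:ℝ)..ε, G t with hI
  have hcomp : ∀ i, I i = ∫ t in (0:ℝ)..ε, g i t := by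
    intro i
    have := (PiLp.proj (𝕜 := ℝ) q (fun _ : Fin n => ℝ) i).intervalIntegral_comp_comm hGint
    simpa [hI, hGapp] using this.symm
  -- the vector of H-differences is ε⁻¹ • I
  have hHdiff : ∀ i : Fin n, H (u i.succ) - H (u i.castSucc) = ε⁻¹ * I i := by
    intro i
    rw [hcomp i]
    have hint : ∀ c : ℝ, (∫ t in (0:ℝ)..ε, F (c + t)) = ∫ y in c..(c + ε), F y := by
      intro c
      rw [intervalIntegral.integral_comp_add_left F c, add_zero]
    have hsub : (∫ t in (0:ℝ)..ε, g i t)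
        = (∫ t in (0:ℝ)..ε, F (u i.succ + t)) - ∫ t in (0:ℝ)..ε, F (u i.castSucc + t) :=
      intervalIntegral.integral_sub (hIg _) (hIg _)
    rw [hsub, hint, hint]
    simp only [hH]
    ring
  -- the norm computation
  set w : PiLp q (fun _ : Fin n => ℝ) := ε⁻¹ • I with hw
  have hwnorm : ‖w‖ = (∑ i : Fin n, |H (u i.succ) - H (u i.castSucc)| ^ p) ^ (1 / p) := by
    rw [PiLp.norm_eq_sum (by rw [hqt]; exact hp0) w, hqt]
    congr 1
    refine Finset.sum_congr rfl fun i _ => ?_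
    have : w i = H (u i.succ) - H (u i.castSucc) := by
      rw [hHdiff i]
      rfl
    rw [this, Real.norm_eq_abs]
  -- conclude
  have hnormI : ‖I‖ ≤ ε * M := by
    have h1 : ‖I‖ ≤ ∫ t in (0:ℝ)..ε, ‖G t‖ :=
      intervalIntegral.norm_integral_le_integral_norm hε.le
    have h2 : (∫ t in (0:ℝ)..ε, ‖G t‖) ≤ ∫ _t in (0:ℝ)..ε, M := by
      apply intervalIntegral.integral_mono_on hε.le hGint.norm intervalIntegrable_const
      exact fun t _ => hGnorm t
    have h3 : (∫ _t in (0:ℝ)..ε, M) = ε * M := by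
      rw [intervalIntegral.integral_const]
      simp
    linarith
  have hwle : ‖w‖ ≤ M := by
    rw [hw, norm_smul, Real.norm_eq_abs, abs_of_nonneg (inv_nonneg.mpr hε.le)]
    calc ε⁻¹ * ‖I‖ ≤ ε⁻¹ * (ε * M) := by
          apply mul_le_mul_of_nonneg_left hnormI (inv_nonneg.mpr hε.le)
      _ = M := by field_simp
  rw [← hwnorm]
  exact hwle
end

section
/- Let t > 0, γ ≥ 1, and let F : [0,t] × ℝ → ℝ be such that for every s ∈ [0,t] the function F(s,·) is measurable and locally integrable, and F has bounded γ-variation in x uniformly in s, i.e. M := sup_{s ∈ [0,t]} V_γ(F(s,·)) < ∞. For ε > 0 define H_ε(s,x) := ε⁻¹ ∫_x^{x+ε} F(s,y) dy. Then for every s ∈ [0,t], V_γ(H_ε(s,·)) ≤ V_γ(F(s,·)); in particular sup_{s ∈ [0,t]} V_γ(H_ε(s,·)) ≤ M, so H_ε also has bounded γ-variation in x uniformly in s. -/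
open MeasureTheory Filter Set
open scoped ENNReal

/-- Jensen's inequality for a probability measure: `(∫⁻ |g|)^γ ≤ ∫⁻ |g|^γ` for `γ ≥ 1`. -/
lemma jensen_rpow {μ : Measure ℝ} [IsProbabilityMeasure μ] {γ : ℝ} (hγ : 1 ≤ γ)
    {g : ℝ → ℝ} (hg : Measurable g) :
    (∫⁻ y, ENNReal.ofReal |g y| ∂μ) ^ γ ≤ ∫⁻ y, ENNReal.ofReal |g y| ^ γ ∂μ := by
  have hγ0 : 0 < γ := lt_of_lt_of_le one_pos hγ
  have hpq : (1 : ℝ≥0∞) ≤ ENNReal.ofReal γ := by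
    rw [← ENNReal.ofReal_one]
    exact ENNReal.ofReal_le_ofReal hγ
  have h := eLpNorm_le_eLpNorm_of_exponent_le (p := 1) (q := ENNReal.ofReal γ) hpq
    (μ := μ) (hg.aestronglyMeasurable)
  rw [eLpNorm_one_eq_lintegral_enorm,
    eLpNorm_eq_lintegral_rpow_enorm_toReal (by simp [hγ0, hγ0.ne']) (by simp)] at h
  simp only [ENNReal.toReal_ofReal hγ0.le, Real.enorm_eq_ofReal_abs] at h
  calc (∫⁻ y, ENNReal.ofReal |g y| ∂μ) ^ γ
      ≤ (((∫⁻ y, ENNReal.ofReal |g y| ^ γ ∂μ) ^ (1 / γ)) : ℝ≥0∞) ^ γ :=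
        ENNReal.rpow_le_rpow h hγ0.le
    _ = ∫⁻ y, ENNReal.ofReal |g y| ^ γ ∂μ := by
        rw [← ENNReal.rpow_mul, one_div, inv_mul_cancel₀ hγ0.ne', ENNReal.rpow_one]

/-- Let `F(s,·)` be measurable, locally integrable, and of bounded
`γ`-variation in `x` uniformly in `s ∈ [0,t]`, i.e. `M := sup_{s ∈ [0,t]} V_γ(F(s,·)) < ∞`.
Then the spatial averages `H_ε(s,x) = ε⁻¹ ∫_x^{x+ε} F(s,y) dy` satisfy
`V_γ(H_ε(s,·)) ≤ V_γ(F(s,·))` for every `s ∈ [0,t]`; in particular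
`sup_{s ∈ [0,t]} V_γ(H_ε(s,·)) ≤ M`, so `H_ε` also has bounded `γ`-variation in `x`
uniformly in `s`. -/
theorem pVar_averaged_le_uniform (t γ : ℝ) (ht : 0 < t) (hγ : 1 ≤ γ)
    (F : ℝ → ℝ → ℝ)
    (hFm : ∀ s ∈ Set.Icc (0 : ℝ) t, Measurable (F s))
    (hFi : ∀ s ∈ Set.Icc (0 : ℝ) t, LocallyIntegrable (F s) (volume : Measure ℝ))
    (hM : (⨆ s : Set.Icc (0 : ℝ) t, pVar γ (F s)) < ⊤)
    (ε : ℝ) (hε : 0 < ε) :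
    (∀ s ∈ Set.Icc (0 : ℝ) t,
        pVar γ (fun x => ε⁻¹ * ∫ y in x..(x + ε), F s y) ≤ pVar γ (F s)) ∧
    (⨆ s : Set.Icc (0 : ℝ) t, pVar γ (fun x => ε⁻¹ * ∫ y in x..(x + ε), F s y)) ≤
      ⨆ s : Set.Icc (0 : ℝ) t, pVar γ (F s) := by
  have hγ0 : 0 < γ := lt_of_lt_of_le one_pos hγ
  -- the normalized measure on (0, ε]
  set μ : Measure ℝ := (ENNReal.ofReal ε)⁻¹ • (volume : Measure ℝ).restrict (Ioc 0 ε) with hμ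
  have hεne : ENNReal.ofReal ε ≠ 0 := by simp [hε, hε.ne']
  haveI : IsProbabilityMeasure μ := by
    constructor
    rw [hμ]
    simp only [Measure.smul_apply, Measure.restrict_apply MeasurableSet.univ, univ_inter,
      Real.volume_Ioc, smul_eq_mul, sub_zero]
    exact ENNReal.inv_mul_cancel hεne ENNReal.ofReal_ne_top
  have main : ∀ s ∈ Set.Icc (0 : ℝ) t,
      pVar γ (fun x => ε⁻¹ * ∫ y in x..(x + ε), F s y) ≤ pVar γ (F s) := by
    intro s hs
    have hm := hFm s hs
    have hloc := hFi s hs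
    -- interval integrability of translates
    have hii : ∀ x : ℝ, IntervalIntegrable (fun y => F s (x + y)) volume 0 ε := by
      intro x
      have : IntervalIntegrable (F s) volume x (x + ε) :=
        (hloc.integrableOn_isCompact isCompact_uIcc).intervalIntegrable
      simpa using this.comp_add_left x
    -- rewrite the averaged function
    have hrw : ∀ x : ℝ, (∫ y in x..(x + ε), F s y) = ∫ y in (0:ℝ)..ε, F s (x + y) := by
      intro x
      rw [intervalIntegral.integral_comp_add_left (F s) x]
      simp
    -- key pointwise bound on increments
    have key : ∀ a b : ℝ,
        ENNReal.ofReal |(ε⁻¹ * ∫ y in b..(b + ε), F s y) - ε⁻¹ * ∫ y in a..(a + ε), F s y|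
          ≤ ∫⁻ y, ENNReal.ofReal |F s (b + y) - F s (a + y)| ∂μ := by
      intro a b
      have hdiff : (ε⁻¹ * ∫ y in b..(b + ε), F s y) - ε⁻¹ * ∫ y in a..(a + ε), F s y
          = ε⁻¹ * ∫ y in (0:ℝ)..ε, (F s (b + y) - F s (a + y)) := by
        rw [hrw a, hrw b, ← mul_sub, intervalIntegral.integral_sub (hii b) (hii a)]
      rw [hdiff, abs_mul, abs_of_nonneg (inv_nonneg.mpr hε.le)]
      have habs : |∫ y in (0:ℝ)..ε, (F s (b + y) - F s (a + y))|
          ≤ ∫ y in (0:ℝ)..ε, |F s (b + y) - F s (a + y)| := by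
        simpa using intervalIntegral.norm_integral_le_integral_norm (f := fun y =>
          F s (b + y) - F s (a + y)) hε.le
      have hintIoc : IntegrableOn (fun y => |F s (b + y) - F s (a + y)|) (Ioc 0 ε) volume := by
        have : IntervalIntegrable (fun y => F s (b + y) - F s (a + y)) volume 0 ε :=
          (hii b).sub (hii a)
        exact ((this.def' ).mono_set (by rw [uIoc_of_le hε.le])).abs
      calc ENNReal.ofReal (ε⁻¹ * |∫ y in (0:ℝ)..ε, (F s (b + y) - F s (a + y))|)
          ≤ ENNReal.ofReal (ε⁻¹ * ∫ y in (0:ℝ)..ε, |F s (b + y) - F s (a + y)|) := by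
            exact ENNReal.ofReal_le_ofReal (by
              exact mul_le_mul_of_nonneg_left habs (inv_nonneg.mpr hε.le))
        _ = (ENNReal.ofReal ε)⁻¹ *
              ENNReal.ofReal (∫ y in Ioc 0 ε, |F s (b + y) - F s (a + y)|) := by
            rw [ENNReal.ofReal_mul (inv_nonneg.mpr hε.le), ENNReal.ofReal_inv_of_pos hε,
              intervalIntegral.integral_of_le hε.le]
        _ = (ENNReal.ofReal ε)⁻¹ *
              ∫⁻ y in Ioc 0 ε, ENNReal.ofReal |F s (b + y) - F s (a + y)| := by
            rw [ofReal_integral_eq_lintegral_ofReal hintIoc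
              (Filter.Eventually.of_forall fun y => abs_nonneg _)]
        _ = ∫⁻ y, ENNReal.ofReal |F s (b + y) - F s (a + y)| ∂μ := by
            rw [hμ, lintegral_smul_measure, smul_eq_mul]
    -- now bound the variation
    rw [pVar]
    refine iSup_le fun n => iSup_le fun u => iSup_le fun hu => ?_
    -- pointwise: shifted partition
    have hpoint : ∀ y : ℝ,
        ∑ i : Fin n, ENNReal.ofReal |F s (u i.succ + y) - F s (u i.castSucc + y)| ^ γ
          ≤ (pVar γ (F s)) ^ γ := by
      intro y
      have hu' : StrictMono (fun i => u i + y) := fun i j hij => by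
        simpa using (hu hij)
      have hle : (∑ i : Fin n,
          ENNReal.ofReal |F s (u i.succ + y) - F s (u i.castSucc + y)| ^ γ) ^ (1 / γ)
            ≤ pVar γ (F s) := by
        rw [pVar]
        exact le_iSup_of_le n (le_iSup_of_le (fun i => u i + y) (le_iSup_of_le hu' le_rfl))
      calc (∑ i : Fin n, ENNReal.ofReal |F s (u i.succ + y) - F s (u i.castSucc + y)| ^ γ)
          = ((∑ i : Fin n,
              ENNReal.ofReal |F s (u i.succ + y) - F s (u i.castSucc + y)| ^ γ) ^ (1/γ)) ^ γ := by
            rw [← ENNReal.rpow_mul, one_div, inv_mul_cancel₀ hγ0.ne', ENNReal.rpow_one]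
        _ ≤ (pVar γ (F s)) ^ γ := ENNReal.rpow_le_rpow hle hγ0.le
    have hmeas : ∀ i : Fin n, Measurable (fun y => F s (u i.succ + y) - F s (u i.castSucc + y)) :=
      fun i => (hm.comp (measurable_const_add _)).sub (hm.comp (measurable_const_add _))
    have step : (∑ i : Fin n, ENNReal.ofReal
          |(fun x => ε⁻¹ * ∫ y in x..(x + ε), F s y) (u i.succ)
            - (fun x => ε⁻¹ * ∫ y in x..(x + ε), F s y) (u i.castSucc)| ^ γ)
        ≤ (pVar γ (F s)) ^ γ := by
      calc (∑ i : Fin n, ENNReal.ofReal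
            |(fun x => ε⁻¹ * ∫ y in x..(x + ε), F s y) (u i.succ)
              - (fun x => ε⁻¹ * ∫ y in x..(x + ε), F s y) (u i.castSucc)| ^ γ)
          ≤ ∑ i : Fin n,
              (∫⁻ y, ENNReal.ofReal |F s (u i.succ + y) - F s (u i.castSucc + y)| ∂μ) ^ γ := by
            refine Finset.sum_le_sum fun i _ => ?_
            exact ENNReal.rpow_le_rpow (key (u i.castSucc) (u i.succ)) hγ0.le
        _ ≤ ∑ i : Fin n,
              ∫⁻ y, ENNReal.ofReal |F s (u i.succ + y) - F s (u i.castSucc + y)| ^ γ ∂μ := by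
            refine Finset.sum_le_sum fun i _ => ?_
            exact jensen_rpow hγ (hmeas i)
        _ = ∫⁻ y, ∑ i : Fin n,
              ENNReal.ofReal |F s (u i.succ + y) - F s (u i.castSucc + y)| ^ γ ∂μ := by
            rw [lintegral_finset_sum]
            intro i _
            exact ENNReal.continuous_rpow_const.measurable.comp (hmeas i).abs.ennreal_ofReal
        _ ≤ ∫⁻ _, (pVar γ (F s)) ^ γ ∂μ := lintegral_mono fun y => hpoint y
        _ = (pVar γ (F s)) ^ γ := by simp
    calc (∑ i : Fin n, ENNReal.ofReal
          |(fun x => ε⁻¹ * ∫ y in x..(x + ε), F s y) (u i.succ)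
            - (fun x => ε⁻¹ * ∫ y in x..(x + ε), F s y) (u i.castSucc)| ^ γ) ^ (1 / γ)
        ≤ ((pVar γ (F s)) ^ γ) ^ (1 / γ) := ENNReal.rpow_le_rpow step (by positivity)
      _ = pVar γ (F s) := by
          rw [← ENNReal.rpow_mul, one_div, mul_inv_cancel₀ hγ0.ne', ENNReal.rpow_one]
  exact ⟨main, iSup_mono fun s => main s s.2⟩
end

section
/- Let t > 0, p ≥ 1, q ≥ 1, and let F : [0,t] × ℝ → ℝ be such that F(s,·) is measurable and locally integrable for each s ∈ [0,t], and F has finite two-parameter (p,q)-variation V_{p,q}(F) := sup over all finite grids s_0 < s_1 < ⋯ < s_m in [0,t] and x_0 < x_1 < ⋯ < x_n in ℝ of (∑_{i=0}^{m−1} (∑_{j=0}^{n−1} |Δ_{ij} F|^p)^{q/p})^{1/q}, where Δ_{ij} F := F(s_{i+1}, x_{j+1}) − F(s_{i+1}, x_j) − F(s_i, x_{j+1}) + F(s_i, x_j). For ε > 0 define H_ε(s,x) := ε⁻¹ ∫_x^{x+ε} F(s,y) dy. Then H_ε has finite two-parameter (p,q)-variation with V_{p,q}(H_ε) ≤ V_{p,q}(F).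 -/
open MeasureTheory Filter Set
open scoped ENNReal

/-- The two-parameter `(p,q)`-variation of `G : [0,t] × ℝ → ℝ`: the supremum over all
finite grids `s_0 < ⋯ < s_m` in `[0,t]` and `x_0 < ⋯ < x_n` in `ℝ` of
`(∑_i (∑_j |Δ_{ij} G|^p)^{q/p})^{1/q}`, where
`Δ_{ij} G = G(s_{i+1},x_{j+1}) − G(s_{i+1},x_j) − G(s_i,x_{j+1}) + G(s_i,x_j)` is the
rectangular increment; valued in `ℝ≥0∞`. -/
noncomputable def pqVar (p q t : ℝ) (G : ℝ → ℝ → ℝ) : ℝ≥0∞ :=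
  ⨆ (m : ℕ) (n : ℕ) (s : Fin (m + 1) → ℝ) (x : Fin (n + 1) → ℝ)
    (_ : StrictMono s) (_ : ∀ i, s i ∈ Set.Icc 0 t) (_ : StrictMono x),
    (∑ i : Fin m,
        (∑ j : Fin n,
            ENNReal.ofReal
              |G (s i.succ) (x j.succ) - G (s i.succ) (x j.castSucc) -
                G (s i.castSucc) (x j.succ) + G (s i.castSucc) (x j.castSucc)| ^ p) ^
          (q / p)) ^ (1 / q)

/-- The real mixed `ℓ^q(ℓ^p)` quantity of a matrix. -/
noncomputable def mixedNorm (p q : ℝ) {m n : ℕ} (A : Fin m → Fin n → ℝ) : ℝ :=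
  (∑ i : Fin m, (∑ j : Fin n, |A i j| ^ p) ^ (q / p)) ^ (1 / q)

lemma mixedNorm_nonneg (p q : ℝ) {m n : ℕ} (A : Fin m → Fin n → ℝ) :
    0 ≤ mixedNorm p q A := by
  apply Real.rpow_nonneg
  exact Finset.sum_nonneg fun i _ => Real.rpow_nonneg
    (Finset.sum_nonneg fun j _ => Real.rpow_nonneg (abs_nonneg _) p) _

lemma ennTerm_eq_ofReal {p q : ℝ} (hp : 1 ≤ p) (hq : 1 ≤ q) {m n : ℕ}
    (A : Fin m → Fin n → ℝ) :
    (∑ i : Fin m, (∑ j : Fin n, ENNReal.ofReal |A i j| ^ p) ^ (q / p)) ^ (1 / q)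
      = ENNReal.ofReal (mixedNorm p q A) := by
  have hp0 : (0:ℝ) ≤ p := by linarith
  have hq0 : (0:ℝ) < q := by linarith
  have hinner : ∀ i : Fin m, 0 ≤ ∑ j : Fin n, |A i j| ^ p :=
    fun i => Finset.sum_nonneg fun j _ => Real.rpow_nonneg (abs_nonneg _) p
  have houter : 0 ≤ ∑ i : Fin m, (∑ j : Fin n, |A i j| ^ p) ^ (q / p) :=
    Finset.sum_nonneg fun i _ => Real.rpow_nonneg (hinner i) _
  rw [mixedNorm, ← ENNReal.ofReal_rpow_of_nonneg houter (by positivity)]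
  congr 1
  rw [ENNReal.ofReal_sum_of_nonneg (fun i _ => Real.rpow_nonneg (hinner i) _)]
  refine Finset.sum_congr rfl fun i _ => ?_
  rw [← ENNReal.ofReal_rpow_of_nonneg (hinner i) (by positivity)]
  congr 1
  rw [ENNReal.ofReal_sum_of_nonneg (fun j _ => Real.rpow_nonneg (abs_nonneg _) p)]
  exact Finset.sum_congr rfl fun j _ =>
    ENNReal.ofReal_rpow_of_nonneg (abs_nonneg _) hp0

lemma piLp_norm_eq {p q : ℝ} (hp : 1 ≤ p) (hq : 1 ≤ q) {m n : ℕ}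
    (A : Fin m → Fin n → ℝ) :
    ‖((WithLp.equiv (ENNReal.ofReal q) _).symm
        (fun i : Fin m => (WithLp.equiv (ENNReal.ofReal p) (Fin n → ℝ)).symm (A i)) :
        PiLp (ENNReal.ofReal q) fun _ : Fin m => PiLp (ENNReal.ofReal p) fun _ : Fin n => ℝ)‖
      = mixedNorm p q A := by
  have hp0 : (0:ℝ) < p := by linarith
  have hq0 : (0:ℝ) < q := by linarith
  have htp : (ENNReal.ofReal p).toReal = p := ENNReal.toReal_ofReal hp0.le
  have htq : (ENNReal.ofReal q).toReal = q := ENNReal.toReal_ofReal hq0.le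
  rw [PiLp.norm_eq_sum (by rw [htq]; exact hq0), htq, mixedNorm]
  congr 1
  refine Finset.sum_congr rfl fun i _ => ?_
  have h1 : ‖((WithLp.equiv (ENNReal.ofReal q) _).symm
        (fun i : Fin m => (WithLp.equiv (ENNReal.ofReal p) (Fin n → ℝ)).symm (A i)) :
        PiLp (ENNReal.ofReal q) fun _ : Fin m => PiLp (ENNReal.ofReal p) fun _ : Fin n => ℝ) i‖
      = (∑ j : Fin n, |A i j| ^ p) ^ (1 / p) := by
    simp only [WithLp.equiv_symm_apply, PiLp.toLp_apply]
    rw [PiLp.norm_eq_sum (by rw [htp]; exact hp0), htp]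
    simp [Real.norm_eq_abs]
  rw [h1, ← Real.rpow_mul (Finset.sum_nonneg fun j _ => Real.rpow_nonneg (abs_nonneg _) p)]
  congr 1
  field_simp

lemma grid_le_pqVar (p q t : ℝ) (G : ℝ → ℝ → ℝ) {m n : ℕ}
    (s : Fin (m + 1) → ℝ) (x : Fin (n + 1) → ℝ)
    (hs : StrictMono s) (hst : ∀ i, s i ∈ Set.Icc 0 t) (hx : StrictMono x) :
    (∑ i : Fin m,
        (∑ j : Fin n,
            ENNReal.ofReal
              |G (s i.succ) (x j.succ) - G (s i.succ) (x j.castSucc) -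
                G (s i.castSucc) (x j.succ) + G (s i.castSucc) (x j.castSucc)| ^ p) ^
          (q / p)) ^ (1 / q) ≤ pqVar p q t G := by
  exact le_iSup_of_le m <| le_iSup_of_le n <| le_iSup_of_le s <| le_iSup_of_le x <|
    le_iSup_of_le hs <| le_iSup_of_le hst <| le_iSup_of_le hx le_rfl

/-- If `F(s,·)` is measurable and locally integrable for each
`s ∈ [0,t]` and `F` has finite two-parameter `(p,q)`-variation, then the spatial average
`H_ε(s,x) = ε⁻¹ ∫_x^{x+ε} F(s,y) dy` has finite `(p,q)`-variation with
`V_{p,q}(H_ε) ≤ V_{p,q}(F)`. -/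
theorem pqVar_averaged_le (t p q : ℝ) (ht : 0 < t) (hp : 1 ≤ p) (hq : 1 ≤ q)
    (F : ℝ → ℝ → ℝ)
    (hFm : ∀ s ∈ Set.Icc (0 : ℝ) t, Measurable (F s))
    (hFi : ∀ s ∈ Set.Icc (0 : ℝ) t, LocallyIntegrable (F s) (volume : Measure ℝ))
    (hFv : pqVar p q t F < ⊤)
    (ε : ℝ) (hε : 0 < ε) :
    pqVar p q t (fun s x => ε⁻¹ * ∫ y in x..(x + ε), F s y) ≤ pqVar p q t F := by
  have hp0 : (0:ℝ) < p := lt_of_lt_of_le one_pos hp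
  have hq0 : (0:ℝ) < q := lt_of_lt_of_le one_pos hq
  haveI factp : Fact (1 ≤ ENNReal.ofReal p) := ⟨ENNReal.one_le_ofReal.2 hp⟩
  haveI factq : Fact (1 ≤ ENNReal.ofReal q) := ⟨ENNReal.one_le_ofReal.2 hq⟩
  set H : ℝ → ℝ → ℝ := fun s x => ε⁻¹ * ∫ y in x..(x + ε), F s y with hHdef
  conv_lhs => rw [pqVar]
  refine iSup_le fun m => iSup_le fun n => iSup_le fun s => iSup_le fun x =>
    iSup_le fun hs => iSup_le fun hst => iSup_le fun hx => ?_
  set V : ℝ := (pqVar p q t F).toReal with hV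
  -- the translated rectangular increments of F
  set g : ℝ → Fin m → Fin n → ℝ := fun u i j =>
    F (s i.succ) (x j.succ + u) - F (s i.succ) (x j.castSucc + u) -
      F (s i.castSucc) (x j.succ + u) + F (s i.castSucc) (x j.castSucc + u) with hgdef
  -- uniform bound on the mixed norm of the translated increments
  have hbound : ∀ u : ℝ, mixedNorm p q (g u) ≤ V := by
    intro u
    have hxu : StrictMono fun j : Fin (n + 1) => x j + u :=
      fun a b hab => by simpa using add_lt_add_right (hx hab) u
    have h1 : ENNReal.ofReal (mixedNorm p q (g u)) ≤ pqVar p q t F := by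
      rw [← ennTerm_eq_ofReal hp hq]
      exact grid_le_pqVar p q t F s (fun j => x j + u) hs hst hxu
    exact (ENNReal.ofReal_le_iff_le_toReal hFv.ne).1 h1
  -- the PiLp-valued function of translates
  set f : ℝ → PiLp (ENNReal.ofReal q) fun _ : Fin m =>
      PiLp (ENNReal.ofReal p) fun _ : Fin n => ℝ := fun u =>
    (WithLp.equiv (ENNReal.ofReal q) _).symm
      (fun i => (WithLp.equiv (ENNReal.ofReal p) (Fin n → ℝ)).symm (g u i)) with hfdef
  have hfnorm : ∀ u, ‖f u‖ = mixedNorm p q (g u) := fun u => piLp_norm_eq hp hq (g u)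
  set μ : Measure ℝ := volume.restrict (Set.Ioc 0 ε) with hμ
  haveI : IsFiniteMeasure μ :=
    ⟨by rw [hμ, Measure.restrict_apply_univ]; exact measure_Ioc_lt_top⟩
  -- measurability and integrability
  have hgm : ∀ i j, Measurable fun u => g u i j := by
    intro i j
    have h : ∀ (a : Fin (m + 1)) (c : ℝ), Measurable fun u => F (s a) (c + u) :=
      fun a c => (hFm _ (hst a)).comp (measurable_const.add measurable_id)
    simp only [hgdef]
    exact (((h i.succ _).sub (h i.succ _)).sub (h i.castSucc _)).add (h i.castSucc _)
  have hfm : AEStronglyMeasurable f μ := by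
    have hcont : Continuous fun B : Fin m → Fin n → ℝ =>
        ((WithLp.equiv (ENNReal.ofReal q) _).symm
          (fun i => (WithLp.equiv (ENNReal.ofReal p) (Fin n → ℝ)).symm (B i)) :
          PiLp (ENNReal.ofReal q) fun _ : Fin m =>
            PiLp (ENNReal.ofReal p) fun _ : Fin n => ℝ) :=
      (PiLp.continuous_toLp _ _).comp
        (continuous_pi fun i => (PiLp.continuous_toLp _ _).comp (continuous_apply i))
    have hgm' : Measurable fun u => (fun i j => g u i j) :=
      measurable_pi_lambda _ fun i => measurable_pi_lambda _ fun j => hgm i j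
    exact hcont.comp_aestronglyMeasurable hgm'.aestronglyMeasurable
  have hfint : Integrable f μ :=
    (integrable_const V).mono' hfm
      (Eventually.of_forall fun u => by rw [hfnorm]; exact hbound u)
  set I := ∫ u, f u ∂μ with hI
  -- components of the integral
  have hIij : ∀ (i : Fin m) (j : Fin n), I i j = ∫ u, g u i j ∂μ := by
    intro i j
    set L := (PiLp.proj (𝕜 := ℝ) (ENNReal.ofReal p) (fun _ : Fin n => ℝ) j).comp
      (PiLp.proj (𝕜 := ℝ) (ENNReal.ofReal q)
        (fun _ : Fin m => PiLp (ENNReal.ofReal p) fun _ : Fin n => ℝ) i) with hL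
    have h1 : ∫ u, L (f u) ∂μ = L I := L.integral_comp_comm hfint
    have h2 : ∀ u, L (f u) = g u i j := fun u => by
      simp [hL, hfdef, PiLp.proj_apply, WithLp.equiv_symm_apply, PiLp.toLp_apply]
    have h3 : L I = I i j := by simp [hL, PiLp.proj_apply]
    rw [← h3, ← h1]
    exact integral_congr_ae (Eventually.of_forall h2)
  -- norm bound on the integral
  have hInorm : ‖I‖ ≤ ε * V := by
    calc ‖I‖ ≤ ∫ u, ‖f u‖ ∂μ := norm_integral_le_integral_norm f
      _ ≤ ∫ _u, V ∂μ :=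
        integral_mono hfint.norm (integrable_const V)
          (fun u => by rw [hfnorm]; exact hbound u)
      _ = ε * V := by
        simp [hμ, integral_const, Measure.restrict_apply_univ, Real.volume_Ioc,
          ENNReal.toReal_ofReal hε.le, smul_eq_mul, hε.le]
  -- interval integrability of translates
  have hint : ∀ (a : Fin (m + 1)) (c : ℝ),
      IntervalIntegrable (fun u => F (s a) (c + u)) volume 0 ε := by
    intro a c
    have h0 : IntervalIntegrable (F (s a)) volume c (c + ε) :=
      ((hFi _ (hst a)).integrableOn_isCompact isCompact_uIcc).intervalIntegrable
    simpa using h0.comp_add_left c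
  -- the rectangular increment of H
  have hΔ : ∀ (i : Fin m) (j : Fin n),
      H (s i.succ) (x j.succ) - H (s i.succ) (x j.castSucc) -
        H (s i.castSucc) (x j.succ) + H (s i.castSucc) (x j.castSucc)
        = ε⁻¹ * I i j := by
    intro i j
    have hH : ∀ (a : Fin (m + 1)) (c : ℝ),
        H (s a) c = ε⁻¹ * ∫ u in (0:ℝ)..ε, F (s a) (c + u) := by
      intro a c
      rw [hHdef]
      simp only
      rw [intervalIntegral.integral_comp_add_left (F (s a)) c, add_zero]
    have I1 := hint i.succ (x j.succ)
    have I2 := hint i.succ (x j.castSucc)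
    have I3 := hint i.castSucc (x j.succ)
    have I4 := hint i.castSucc (x j.castSucc)
    have comb : (∫ u in (0:ℝ)..ε, g u i j)
        = (∫ u in (0:ℝ)..ε, F (s i.succ) (x j.succ + u))
          - (∫ u in (0:ℝ)..ε, F (s i.succ) (x j.castSucc + u))
          - (∫ u in (0:ℝ)..ε, F (s i.castSucc) (x j.succ + u))
          + (∫ u in (0:ℝ)..ε, F (s i.castSucc) (x j.castSucc + u)) := by
      rw [← intervalIntegral.integral_sub I1 I2,
        ← intervalIntegral.integral_sub (I1.sub I2) I3,
        ← intervalIntegral.integral_add ((I1.sub I2).sub I3) I4]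
    have hioc : (∫ u in (0:ℝ)..ε, g u i j) = ∫ u, g u i j ∂μ := by
      rw [intervalIntegral.integral_of_le hε.le, hμ]
    rw [hH i.succ, hH i.succ, hH i.castSucc, hH i.castSucc, hIij i j, ← hioc, comb]
    ring
  -- conclude
  calc (∑ i : Fin m,
        (∑ j : Fin n,
            ENNReal.ofReal
              |H (s i.succ) (x j.succ) - H (s i.succ) (x j.castSucc) -
                H (s i.castSucc) (x j.succ) + H (s i.castSucc) (x j.castSucc)| ^ p) ^
          (q / p)) ^ (1 / q)
      = ENNReal.ofReal (mixedNorm p q fun i j => ε⁻¹ * I i j) := by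
        simp only [hΔ]
        exact ennTerm_eq_ofReal hp hq _
    _ ≤ ENNReal.ofReal V := by
        apply ENNReal.ofReal_le_ofReal
        have heq : (fun i => fun j => ε⁻¹ * I i j) = fun i j => (ε⁻¹ • I) i j := rfl
        have hn : mixedNorm p q (fun i j => ε⁻¹ * I i j) = ‖ε⁻¹ • I‖ := by
          rw [← piLp_norm_eq hp hq (fun i j => ε⁻¹ * I i j)]
          rfl
        rw [hn, norm_smul, Real.norm_eq_abs, abs_of_pos (inv_pos.2 hε)]
        calc ε⁻¹ * ‖I‖ ≤ ε⁻¹ * (ε * V) :=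
            mul_le_mul_of_nonneg_left hInorm (inv_nonneg.2 hε.le)
          _ = V := by field_simp
    _ = pqVar p q t F := ENNReal.ofReal_toReal hFv.ne
end
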